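/- Let V be a complex vector space of even dimension 2n with a quaternionic structure J. The number of orbits of SL(V, ℍ) (the group of determinant-1 C-linear operators commuting with J) on the Grassmannian Gr(k, V), for k ≤ n, equals ⌊k/2⌋ + 1. -/

import Mathlib

open Module Submodule

noncomputable section

instance : RingHomSurjective (starRingEnd ℂ) :=
  ⟨fun x => ⟨star x, by simp⟩⟩

variable {V : Type} [AddCommGroup V] [Module ℂ V]

/-- A quaternionic structure on a complex vector space is an antilinear automorphism `J`
with `J² = -id`. -/
def IsQuaternionicStructure (J : V →ₗ⋆[ℂ] V) : Prop :=
  ∀ v, J (J v) = -v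

namespace QH


/-- reindexing helper -/
theorem elim_comp_map {W : Type} {ι κ : Type} (e f : κ → W) (σ : ι → κ) :
    Sum.elim (e ∘ σ) (f ∘ σ) = Sum.elim e f ∘ Sum.map σ σ := by
  funext z; cases z <;> rfl

theorem elim_four {W ι κ ι' κ' : Type} (a : ι → W) (b : κ → W) (a' : ι' → W) (b' : κ' → W) :
    Sum.elim (Sum.elim a b) (Sum.elim a' b')
      = Sum.elim (Sum.elim a a') (Sum.elim b b') ∘ (Equiv.sumSumSumComm ι κ ι' κ') := by
  funext z; rcases z with (i | j) | (i | j) <;> rfl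

theorem comp_elim {W W' ι κ : Type} (g : W → W') (a : ι → W) (b : κ → W) :
    g ∘ Sum.elim a b = Sum.elim (g ∘ a) (g ∘ b) := by
  funext z; cases z <;> rfl

variable {J : V →ₗ⋆[ℂ] V}

theorem inj (hJ : IsQuaternionicStructure J) : Function.Injective J := by
  intro x y h
  have h2 := congrArg J h
  rw [hJ x, hJ y] at h2
  simpa using h2

theorem pair_coeff (hJ : IsQuaternionicStructure J) {x : V} (hx : x ≠ 0) (s t : ℂ)
    (h : s • x + t • J x = 0) : s = 0 ∧ t = 0 := by
  -- apply J to the relation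
  have h1 : (starRingEnd ℂ s) • J x + (starRingEnd ℂ t) • (-x) = 0 := by
    have := congrArg J h
    rw [map_add, map_smulₛₗ, map_smulₛₗ, hJ x, map_zero] at this
    exact this
  -- From h: s • x = - t • J x
  by_cases ht : t = 0
  · refine ⟨?_, ht⟩
    rw [ht, zero_smul, add_zero] at h
    exact (smul_eq_zero.mp h).resolve_right hx
  · exfalso
    -- J x = -(s/t) • x  from h
    have hJx : J x = (-(s / t)) • x := by
      have : t • J x = -(s • x) := by linear_combination (norm := module) h
      have := congrArg (fun w => t⁻¹ • w) this
      simp only [smul_smul, inv_mul_cancel₀ ht, one_smul] at this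
      rw [this, smul_neg, smul_smul, ← neg_smul]
      congr 1
      field_simp
    -- substitute in h1
    rw [hJx, smul_smul, smul_neg] at h1
    -- (conj s * (-(s/t))) • x - conj t • x = 0
    have hco : (starRingEnd ℂ s * (-(s / t)) - starRingEnd ℂ t) • x = 0 := by
      rw [sub_smul]
      linear_combination (norm := module) h1
    rcases smul_eq_zero.mp hco with hc | hx' 
    · -- coefficient zero: -conj s * s / t - conj t = 0 ⇒ |s|² + |t|² = 0
      have ht' : (starRingEnd ℂ s * s + starRingEnd ℂ t * t) = 0 := by
        have := sub_eq_zero.mp hc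
        field_simp at this
        linear_combination -this
      have : Complex.normSq s + Complex.normSq t = 0 := by
        have h2 := congrArg Complex.re ht'
        simpa [Complex.mul_conj', Complex.add_re, ← Complex.normSq_eq_conj_mul_self] using h2
      have hs0 : Complex.normSq t = 0 := by nlinarith [Complex.normSq_nonneg s, Complex.normSq_nonneg t]
      exact ht (Complex.normSq_eq_zero.mp hs0)
    · exact hx hx'

theorem pair_li (hJ : IsQuaternionicStructure J) {x : V} (hx : x ≠ 0) :
    LinearIndependent ℂ (Sum.elim (fun _ : Fin 1 => x) (fun _ : Fin 1 => J x)) := by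
  rw [Fintype.linearIndependent_iff]
  intro g hg i
  rw [Fintype.sum_sum_type] at hg
  simp only [Finset.univ_unique, Fin.default_eq_zero, Finset.sum_singleton, Sum.elim_inl,
    Sum.elim_inr] at hg
  obtain ⟨h1, h2⟩ := pair_coeff hJ hx _ _ hg
  rcases i with i | i <;> · rw [Fin.fin_one_eq_zero i]; assumption



section General
variable {M : Type} [AddCommGroup M] [Module ℂ M]

theorem disjoint_span_quotient {κ : Type} [Fintype κ] (U : Submodule ℂ M) (b : κ → M)
    (hb : LinearIndependent ℂ (fun j => (Submodule.Quotient.mk (b j) : M ⧸ U))) :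
    Disjoint U (span ℂ (Set.range b)) := by
  rw [Submodule.disjoint_def]
  intro x hxU hxb
  obtain ⟨c, rfl⟩ := (mem_span_range_iff_exists_fun ℂ).mp hxb
  have h0 : (Submodule.Quotient.mk (∑ i, c i • b i) : M ⧸ U) = 0 :=
    (Submodule.Quotient.mk_eq_zero U).mpr hxU
  have hsum : ∑ i, c i • (Submodule.Quotient.mk (b i) : M ⧸ U) = 0 := by
    rw [← h0]
    simp only [← Submodule.mkQ_apply, ← map_smul, ← map_sum]
  have := Fintype.linearIndependent_iff.mp hb c hsum
  simp [this]

theorem li_sum_quotient {ι κ : Type} [Fintype ι] [Fintype κ]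
    (U : Submodule ℂ M) (a : ι → M) (b : κ → M) (haU : ∀ i, a i ∈ U)
    (ha : LinearIndependent ℂ a)
    (hb : LinearIndependent ℂ (fun j => (Submodule.Quotient.mk (b j) : M ⧸ U))) :
    LinearIndependent ℂ (Sum.elim a b) := by
  have hb' : LinearIndependent ℂ b := by
    have h : (fun j => (Submodule.Quotient.mk (b j) : M ⧸ U)) = U.mkQ ∘ b := rfl
    rw [h] at hb
    exact hb.of_comp U.mkQ
  refine ha.sum_type hb' ?_
  have h1 : span ℂ (Set.range a) ≤ U := by
    rw [span_le]; rintro _ ⟨i, rfl⟩; exact haU i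
  exact (disjoint_span_quotient U b hb).mono_left h1

theorem span_sum_quotient {ι κ : Type} [Fintype ι] [Fintype κ]
    (U : Submodule ℂ M) (a : ι → M) (b : κ → M)
    (haU : span ℂ (Set.range a) = U)
    (hbq : span ℂ (Set.range fun j => (Submodule.Quotient.mk (b j) : M ⧸ U)) = ⊤) :
    span ℂ (Set.range (Sum.elim a b)) = ⊤ := by
  rw [Set.Sum.elim_range, Submodule.span_union]
  rw [eq_top_iff]
  intro x _
  have hx : (Submodule.Quotient.mk x : M ⧸ U) ∈
      span ℂ (Set.range fun j => (Submodule.Quotient.mk (b j) : M ⧸ U)) := by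
    rw [hbq]; trivial
  obtain ⟨c, hc⟩ := (mem_span_range_iff_exists_fun ℂ).mp hx
  set y := ∑ i, c i • b i with hy
  have hxy : x - y ∈ U := by
    rw [← Submodule.Quotient.eq]
    rw [← hc]
    simp only [← Submodule.mkQ_apply, ← map_smul, ← map_sum]
    rfl
  have hyb : y ∈ span ℂ (Set.range b) := by
    rw [mem_span_range_iff_exists_fun ℂ]; exact ⟨c, rfl⟩
  have : x = (x - y) + y := by abel
  rw [this]
  exact Submodule.add_mem _
    (Submodule.mem_sup_left (by rw [haU]; exact hxy))
    (Submodule.mem_sup_right hyb)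

theorem li_of_span_eq_card {ι : Type} [Fintype ι] (f : ι → M) (Y : Submodule ℂ M)
    [FiniteDimensional ℂ M]
    (hsp : span ℂ (Set.range f) = Y) (hcard : Fintype.card ι = finrank ℂ Y) :
    LinearIndependent ℂ f := by
  have hle : ∀ i, f i ∈ Y := fun i => by
    rw [← hsp]; exact subset_span ⟨i, rfl⟩
  set fY : ι → Y := fun i => ⟨f i, hle i⟩ with hfY
  have hco : Y.subtype ∘ fY = f := rfl
  have hspY : ⊤ ≤ span ℂ (Set.range fY) := by
    have hmap : Submodule.map Y.subtype (span ℂ (Set.range fY)) = Submodule.map Y.subtype ⊤ := by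
      rw [Submodule.map_span, ← Set.range_comp, hco, hsp, Submodule.map_top, Submodule.range_subtype]
    exact le_of_eq (Submodule.map_injective_of_injective Y.injective_subtype hmap).symm
  have := linearIndependent_of_top_le_span_of_card_eq_finrank hspY hcard
  rw [← hco]
  exact this.map' Y.subtype Y.ker_subtype

end General


theorem exists_qfamily (N : ℕ) :
    ∀ (M : Type) [AddCommGroup M] [Module ℂ M] [FiniteDimensional ℂ M]
      (J : M →ₗ⋆[ℂ] M), IsQuaternionicStructure J → finrank ℂ M = N →
      ∃ (ι : Type) (_ : Fintype ι) (v : ι → M),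
        LinearIndependent ℂ (Sum.elim v (fun i => J (v i))) ∧
        span ℂ (Set.range (Sum.elim v (fun i => J (v i)))) = ⊤ ∧
        N = 2 * Fintype.card ι := by
  induction N using Nat.strong_induction_on with
  | _ N IH =>
  intro M _ _ _ J hJ hdim
  rcases Nat.eq_zero_or_pos N with h0 | hpos
  · subst h0
    haveI : Subsingleton M := Module.finrank_zero_iff.mp hdim
    refine ⟨Fin 0, inferInstance, Fin.elim0, linearIndependent_empty_type, ?_, by simp⟩
    exact Subsingleton.elim _ _
  · haveI : Nontrivial M := Module.nontrivial_of_finrank_pos (hdim ▸ hpos)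
    obtain ⟨x, hx⟩ := exists_ne (0 : M)
    have hx2 := pair_li hJ hx
    set U : Submodule ℂ M := span ℂ {x, J x} with hU
    have hrange : Set.range (Sum.elim (fun _ : Fin 1 => x) (fun _ : Fin 1 => J x))
        = {x, J x} := by
      rw [Set.Sum.elim_range]
      simp [Set.pair_comm]
    have hU2 : finrank ℂ U = 2 := by
      have h := finrank_span_eq_card hx2
      rw [hrange] at h
      simpa using h
    have hUJ : U ≤ U.comap J := by
      rw [hU, span_le]
      rintro y (rfl | rfl)
      · exact subset_span (by simp)
      · show J (J x) ∈ U
        rw [hJ x]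
        exact neg_mem (subset_span (by simp))
    set Jq : (M ⧸ U) →ₛₗ[starRingEnd ℂ] M ⧸ U := U.mapQ U J hUJ with hJqdef
    have hJq : IsQuaternionicStructure Jq := by
      intro z
      obtain ⟨y, rfl⟩ := Submodule.Quotient.mk_surjective U z
      show Jq (Jq (Submodule.Quotient.mk y)) = _
      rw [hJqdef, Submodule.mapQ_apply, Submodule.mapQ_apply, hJ y]
      rfl
    have hNU : finrank ℂ (M ⧸ U) + finrank ℂ U = N := by
      rw [← hdim]; exact Submodule.finrank_quotient_add_finrank U
    have hUle : finrank ℂ U ≤ N := by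
      rw [← hdim]; exact U.finrank_le
    have hQdim : finrank ℂ (M ⧸ U) = N - 2 := by omega
    obtain ⟨ι, _, w, hw1, hw2, hw3⟩ :=
      IH (N - 2) (by omega) (M ⧸ U) Jq hJq hQdim
    choose lv hlv using fun j => Submodule.Quotient.mk_surjective U (w j)
    refine ⟨Fin 1 ⊕ ι, inferInstance, Sum.elim (fun _ => x) lv, ?_, ?_, ?_⟩
    · -- independence
      have haU : ∀ i, (Sum.elim (fun _ : Fin 1 => x) (fun _ : Fin 1 => J x)) i ∈ U := by
        rintro (i | i)
        · exact subset_span (by simp)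
        · exact subset_span (by simp)
      have hbmk : (fun j => (Submodule.Quotient.mk ((Sum.elim lv (fun i => J (lv i))) j) : M ⧸ U))
          = Sum.elim w (fun i => Jq (w i)) := by
        funext z
        rcases z with j | j
        · exact hlv j
        · show (Submodule.Quotient.mk (J (lv j)) : M ⧸ U) = Jq (w j)
          rw [hJqdef, ← hlv j, Submodule.mapQ_apply]
      have hsrc : LinearIndependent ℂ
          (Sum.elim (Sum.elim (fun _ : Fin 1 => x) (fun _ : Fin 1 => J x))
            (Sum.elim lv (fun i => J (lv i)))) := by
        apply li_sum_quotient U _ _ haU hx2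
        rw [hbmk]
        exact hw1
      have htgt : Sum.elim (Sum.elim (fun _ : Fin 1 => x) lv)
            (fun i => J (Sum.elim (fun _ : Fin 1 => x) lv i))
          = (Sum.elim (Sum.elim (fun _ : Fin 1 => x) (fun _ : Fin 1 => J x))
              (Sum.elim lv (fun i => J (lv i)))) ∘ (Equiv.sumSumSumComm (Fin 1) ι (Fin 1) ι) := by
        have h2 : (fun i => J (Sum.elim (fun _ : Fin 1 => x) lv i))
            = Sum.elim (fun _ : Fin 1 => J x) (fun i => J (lv i)) := by
          funext z; rcases z with j | j <;> rfl
        rw [h2]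
        exact elim_four _ _ _ _
      rw [htgt]
      exact (linearIndependent_equiv _).mpr hsrc
    · -- span
      have hbmk : (fun j => (Submodule.Quotient.mk ((Sum.elim lv (fun i => J (lv i))) j) : M ⧸ U))
          = Sum.elim w (fun i => Jq (w i)) := by
        funext z
        rcases z with j | j
        · exact hlv j
        · show (Submodule.Quotient.mk (J (lv j)) : M ⧸ U) = Jq (w j)
          rw [hJqdef, ← hlv j, Submodule.mapQ_apply]
      have hsrc : span ℂ (Set.range
          (Sum.elim (Sum.elim (fun _ : Fin 1 => x) (fun _ : Fin 1 => J x))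
            (Sum.elim lv (fun i => J (lv i))))) = ⊤ := by
        apply span_sum_quotient U
        · rw [hrange, hU]
        · rw [hbmk]
          exact hw2
      have htgt : Sum.elim (Sum.elim (fun _ : Fin 1 => x) lv)
            (fun i => J (Sum.elim (fun _ : Fin 1 => x) lv i))
          = (Sum.elim (Sum.elim (fun _ : Fin 1 => x) (fun _ : Fin 1 => J x))
              (Sum.elim lv (fun i => J (lv i)))) ∘ (Equiv.sumSumSumComm (Fin 1) ι (Fin 1) ι) := by
        have h2 : (fun i => J (Sum.elim (fun _ : Fin 1 => x) lv i))
            = Sum.elim (fun _ : Fin 1 => J x) (fun i => J (lv i)) := by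
          funext z; rcases z with j | j <;> rfl
        rw [h2]
        exact elim_four _ _ _ _
      rw [htgt, Set.range_comp, Equiv.range_eq_univ, Set.image_univ, hsrc]
    · -- cardinality
      simp only [Fintype.card_sum, Fintype.card_fin]
      omega



theorem det_restrict_mul_det_mapQ {K M : Type} [Field K] [AddCommGroup M] [Module K M]
    [FiniteDimensional K M] (φ : M →ₗ[K] M) (p : Submodule K M) (hp : ∀ x ∈ p, φ x ∈ p) :
    LinearMap.det φ =
      LinearMap.det (φ.restrict hp) * LinearMap.det (p.mapQ p φ (fun x hx => hp x hx)) := by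
  obtain ⟨q, hq⟩ := p.exists_isCompl
  let bp := Module.finBasis K p
  let bq := Module.finBasis K q
  let e := Submodule.prodEquivOfIsCompl p q hq
  let b : Basis _ K M := (bp.prod bq).map e
  let g := (Submodule.quotientEquivOfIsCompl p q hq).symm
  let bQ : Basis _ K (M ⧸ p) := bq.map g
  have h1 : ∀ (z : M) i, b.repr z (Sum.inl i) = bp.repr (e.symm z).1 i := by
    intro z i
    simp [b, Basis.map_repr, Basis.prod_repr_inl]
  have h2 : ∀ (z : M) i, b.repr z (Sum.inr i) = bq.repr (e.symm z).2 i := by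
    intro z i
    simp [b, Basis.map_repr, Basis.prod_repr_inr]
  have h3 : ∀ j, b (Sum.inl j) = (bp j : M) := by
    intro j
    show e ((bp.prod bq) (Sum.inl j)) = _
    have : (bp.prod bq) (Sum.inl j) = (bp j, 0) :=
      Prod.ext (Basis.prod_apply_inl_fst _ _ _) (Basis.prod_apply_inl_snd _ _ _)
    rw [this, Submodule.coe_prodEquivOfIsCompl']
    simp
  have h4 : ∀ j, b (Sum.inr j) = (bq j : M) := by
    intro j
    show e ((bp.prod bq) (Sum.inr j)) = _
    have : (bp.prod bq) (Sum.inr j) = (0, bq j) :=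
      Prod.ext (Basis.prod_apply_inr_fst _ _ _) (Basis.prod_apply_inr_snd _ _ _)
    rw [this, Submodule.coe_prodEquivOfIsCompl']
    simp
  have hsymm_left : ∀ (z : M) (hz : z ∈ p), e.symm z = ((⟨z, hz⟩ : p), 0) := by
    intro z hz
    exact Submodule.prodEquivOfIsCompl_symm_apply_left (p := p) (q := q) hq (⟨z, hz⟩ : p)
  have key : ∀ (u : p) (w : q), Submodule.quotientEquivOfIsCompl p q hq
      (Submodule.Quotient.mk ((u : M) + (w : M))) = w := by
    intro u w
    have : (Submodule.Quotient.mk ((u : M) + (w : M)) : M ⧸ p)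
        = Submodule.Quotient.mk ((w : M)) := by
      rw [Submodule.Quotient.eq]
      simp [u.2]
    rw [this, Submodule.quotientEquivOfIsCompl_apply_mk_coe]
  have h5 : ∀ z : M, Submodule.quotientEquivOfIsCompl p q hq (Submodule.Quotient.mk z)
      = (e.symm z).2 := by
    intro z
    have hz : z = ((e.symm z).1 : M) + ((e.symm z).2 : M) := by
      conv_lhs => rw [← e.apply_symm_apply z]
      rw [Submodule.coe_prodEquivOfIsCompl']
    conv_lhs => rw [hz]
    exact key _ _
  rw [← LinearMap.det_toMatrix b φ, ← LinearMap.det_toMatrix bp (φ.restrict hp),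
    ← LinearMap.det_toMatrix bQ (p.mapQ p φ (fun x hx => hp x hx)),
    ← Matrix.det_fromBlocks_zero₂₁ (LinearMap.toMatrix bp bp (φ.restrict hp))
      (Matrix.of fun i j => b.repr (φ (b (Sum.inr j))) (Sum.inl i))
      (LinearMap.toMatrix bQ bQ (p.mapQ p φ (fun x hx => hp x hx)))]
  congr 1
  ext x y
  rcases x with i | i <;> rcases y with j | j
  · -- (inl, inl)
    rw [LinearMap.toMatrix_apply, Matrix.fromBlocks_apply₁₁, LinearMap.toMatrix_apply]
    rw [h3, h1]
    have hmem : φ ((bp j : M)) ∈ p := hp _ (bp j).2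
    rw [hsymm_left _ hmem]
    rfl
  · -- (inl, inr) : B block, definitionally
    rw [LinearMap.toMatrix_apply, Matrix.fromBlocks_apply₁₂]
    rfl
  · -- (inr, inl) : zero block
    rw [LinearMap.toMatrix_apply, Matrix.fromBlocks_apply₂₁]
    rw [h3, h2]
    have hmem : φ ((bp j : M)) ∈ p := hp _ (bp j).2
    rw [hsymm_left _ hmem]
    simp
  · -- (inr, inr)
    rw [LinearMap.toMatrix_apply, Matrix.fromBlocks_apply₂₂, LinearMap.toMatrix_apply]
    rw [h4, h2]
    have hbQ : bQ j = Submodule.Quotient.mk ((bq j : M)) := by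
      simp [bQ, g, Basis.map_apply, Submodule.quotientEquivOfIsCompl_symm_apply]
    rw [hbQ, Submodule.mapQ_apply]
    have : bQ.repr (Submodule.Quotient.mk (φ ((bq j : M)))) i
        = bq.repr (Submodule.quotientEquivOfIsCompl p q hq
            (Submodule.Quotient.mk (φ ((bq j : M))))) i := by
      simp [bQ, Basis.map_repr, g]
    rw [this, h5]



theorem det_pos_of_comm (N : ℕ) :
    ∀ (M : Type) [AddCommGroup M] [Module ℂ M] [FiniteDimensional ℂ M]
      (J : M →ₗ⋆[ℂ] M), IsQuaternionicStructure J →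
      ∀ φ : M →ₗ[ℂ] M, Function.Injective φ → (∀ v, φ (J v) = J (φ v)) →
      finrank ℂ M = N →
      ∃ r : ℝ, 0 < r ∧ LinearMap.det φ = (r : ℂ) := by
  induction N using Nat.strong_induction_on with
  | _ N IH =>
  intro M _ _ _ J hJ φ hinj hcomm hdim
  rcases Nat.eq_zero_or_pos N with h0 | hpos
  · subst h0
    haveI : Subsingleton M := Module.finrank_zero_iff.mp hdim
    have hid : φ = LinearMap.id := LinearMap.ext fun z => Subsingleton.elim _ _
    exact ⟨1, one_pos, by rw [hid, LinearMap.det_id]; norm_num⟩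
  haveI : Nontrivial M := Module.nontrivial_of_finrank_pos (hdim ▸ hpos)
  obtain ⟨μ, hμ⟩ := Module.End.exists_eigenvalue (φ : Module.End ℂ M)
  obtain ⟨v, hv⟩ := hμ.exists_hasEigenvector
  have hv0 : v ≠ 0 := hv.right
  have hfv : φ v = μ • v := hv.apply_eq_smul
  have hμ0 : μ ≠ 0 := by
    intro h
    apply hv0
    apply hinj
    rw [hfv, h, zero_smul, map_zero]
  set U : Submodule ℂ M := span ℂ {v, J v} with hU
  have hvU : v ∈ U := subset_span (by simp)
  have hJvU : J v ∈ U := subset_span (by simp)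
  have hx2 := pair_li hJ hv0
  have hrange : Set.range (Sum.elim (fun _ : Fin 1 => v) (fun _ : Fin 1 => J v))
      = {v, J v} := by
    rw [Set.Sum.elim_range]
    simp [Set.pair_comm]
  have hU2 : finrank ℂ U = 2 := by
    have h := finrank_span_eq_card hx2
    rw [hrange] at h
    simpa using h
  have hUJ : U ≤ U.comap J := by
    rw [hU, span_le]
    rintro y (rfl | rfl)
    · exact hJvU
    · show J (J v) ∈ U
      rw [hJ v]
      exact neg_mem hvU
  have hφU : ∀ y ∈ U, φ y ∈ U := by
    have : U ≤ U.comap φ := by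
      rw [hU, span_le]
      intro y hy
      simp only [Set.mem_insert_iff, Set.mem_singleton_iff] at hy
      show φ y ∈ U
      rcases hy with hy | hy <;> rw [hy]
      · rw [hfv]
        exact smul_mem _ _ hvU
      · rw [hcomm, hfv, map_smulₛₗ]
        exact smul_mem _ _ hJvU
    intro y hy
    exact this hy
  -- determinant of the restriction
  set uf : Fin 1 ⊕ Fin 1 → U :=
    Sum.elim (fun _ => (⟨v, hvU⟩ : U)) (fun _ => (⟨J v, hJvU⟩ : U)) with hufdef
  have hufco : U.subtype ∘ uf = Sum.elim (fun _ : Fin 1 => v) (fun _ : Fin 1 => J v) := by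
    funext z; rcases z with i | i <;> rfl
  have hufli : LinearIndependent ℂ uf := by
    apply LinearIndependent.of_comp U.subtype
    rw [hufco]
    exact hx2
  have hufsp : ⊤ ≤ span ℂ (Set.range uf) := by
    have hmap : Submodule.map U.subtype (span ℂ (Set.range uf))
        = Submodule.map U.subtype ⊤ := by
      rw [Submodule.map_span, ← Set.range_comp, hufco, hrange, Submodule.map_top,
        Submodule.range_subtype]
    exact le_of_eq (Submodule.map_injective_of_injective U.injective_subtype hmap).symm
  set bU : Basis (Fin 1 ⊕ Fin 1) ℂ U := Basis.mk hufli hufsp with hbUdef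
  set dvec : Fin 1 ⊕ Fin 1 → ℂ := Sum.elim (fun _ => μ) (fun _ => starRingEnd ℂ μ) with hdvec
  have hdiag : ∀ j, φ.restrict hφU (bU j) = dvec j • bU j := by
    rintro (j | j) <;>
      (apply Subtype.ext
       rw [LinearMap.restrict_coe_apply, hbUdef]
       simp only [Basis.mk_apply, Submodule.coe_smul]
       first
        | (show φ v = μ • v
           exact hfv)
        | (show φ (J v) = starRingEnd ℂ μ • J v
           rw [hcomm, hfv, map_smulₛₗ]))
  have hmtx : LinearMap.toMatrix bU bU (φ.restrict hφU) = Matrix.diagonal dvec := by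
    ext i j
    rw [LinearMap.toMatrix_apply, hdiag j, map_smul, Basis.repr_self]
    rw [Finsupp.smul_single, smul_eq_mul, mul_one, Finsupp.single_apply, Matrix.diagonal_apply]
    by_cases h : i = j
    · subst h; simp
    · rw [if_neg h, if_neg (fun hh => h hh.symm)]
  have hdetres : LinearMap.det (φ.restrict hφU) = μ * starRingEnd ℂ μ := by
    rw [← LinearMap.det_toMatrix bU, hmtx, Matrix.det_diagonal]
    rw [Fintype.prod_sum_type]
    simp [hdvec]
  -- the quotient map
  have hUeq : Submodule.map φ U = U := by
    have hle : Submodule.map φ U ≤ U := by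
      rw [Submodule.map_le_iff_le_comap]
      intro y hy; exact hφU y hy
    have hsurj : Function.Surjective φ := (LinearMap.injective_iff_surjective).mp hinj
    have hfeq : finrank ℂ (Submodule.map φ U) = finrank ℂ U := by
      have := LinearEquiv.finrank_map_eq (LinearEquiv.ofBijective φ ⟨hinj, hsurj⟩) U
      exact this
    exact Submodule.eq_of_le_of_finrank_le hle (le_of_eq hfeq.symm)
  set Jq : (M ⧸ U) →ₛₗ[starRingEnd ℂ] M ⧸ U := U.mapQ U J hUJ with hJqdef
  have hJq : IsQuaternionicStructure Jq := by
    intro z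
    obtain ⟨y, rfl⟩ := Submodule.Quotient.mk_surjective U z
    show Jq (Jq (Submodule.Quotient.mk y)) = _
    rw [hJqdef, Submodule.mapQ_apply, Submodule.mapQ_apply, hJ y]
    rfl
  set φq : (M ⧸ U) →ₗ[ℂ] M ⧸ U := U.mapQ U φ (fun x hx => hφU x hx) with hφqdef
  have hφqinj : Function.Injective φq := by
    rw [← LinearMap.ker_eq_bot]
    rw [Submodule.eq_bot_iff]
    intro z hz
    obtain ⟨y, rfl⟩ := Submodule.Quotient.mk_surjective U z
    rw [LinearMap.mem_ker, hφqdef, Submodule.mapQ_apply, Submodule.Quotient.mk_eq_zero] at hz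
    rw [← hUeq] at hz
    obtain ⟨u, huU, huy⟩ := hz
    have : u = y := hinj huy
    subst this
    rw [Submodule.Quotient.mk_eq_zero]
    exact huU
  have hφqcomm : ∀ z, φq (Jq z) = Jq (φq z) := by
    intro z
    obtain ⟨y, rfl⟩ := Submodule.Quotient.mk_surjective U z
    rw [hφqdef, hJqdef, Submodule.mapQ_apply, Submodule.mapQ_apply, Submodule.mapQ_apply,
      Submodule.mapQ_apply, hcomm]
  have hNU : finrank ℂ (M ⧸ U) + finrank ℂ U = N := by
    rw [← hdim]; exact Submodule.finrank_quotient_add_finrank U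
  have hUle : finrank ℂ U ≤ N := by
    rw [← hdim]; exact U.finrank_le
  obtain ⟨r', hr'pos, hr'⟩ :=
    IH (N - 2) (by omega) (M ⧸ U) Jq hJq φq hφqinj hφqcomm (by omega)
  refine ⟨Complex.normSq μ * r', ?_, ?_⟩
  · have : 0 < Complex.normSq μ := Complex.normSq_pos.mpr hμ0
    positivity
  · rw [det_restrict_mul_det_mapQ φ U hφU, hdetres]
    rw [hr', Complex.mul_conj]
    push_cast
    ring


variable {J : V →ₗ⋆[ℂ] V}

theorem li_J_comp {ι : Type} [Fintype ι] (hJ : IsQuaternionicStructure J) {f : ι → V}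
    (hf : LinearIndependent ℂ f) : LinearIndependent ℂ (fun i => J (f i)) := by
  rw [Fintype.linearIndependent_iff] at hf ⊢
  intro g hg i
  have hkey : J (∑ i, starRingEnd ℂ (g i) • f i) = ∑ i, g i • J (f i) := by
    rw [map_sum]
    congr 1
    funext j
    rw [map_smulₛₗ, Complex.conj_conj]
  rw [← hkey] at hg
  have h0 : (∑ i, starRingEnd ℂ (g i) • f i) = 0 := by
    apply inj hJ
    rw [hg, map_zero]
  have := hf (fun i => starRingEnd ℂ (g i)) h0 i
  simpa using this

theorem finrank_map_J [FiniteDimensional ℂ V] (hJ : IsQuaternionicStructure J)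
    (A : Submodule ℂ V) : finrank ℂ (Submodule.map J A) = finrank ℂ A := by
  set bA := Module.finBasis ℂ A with hbA
  set fam : Fin (finrank ℂ A) → V := fun i => (bA i : V) with hfam
  have hfamli : LinearIndependent ℂ fam :=
    bA.linearIndependent.map' A.subtype A.ker_subtype
  have hfamsp : span ℂ (Set.range fam) = A := by
    have : Set.range fam = A.subtype '' Set.range ⇑bA := by
      rw [← Set.range_comp]; rfl
    rw [this, ← Submodule.map_span, Basis.span_eq, Submodule.map_top, Submodule.range_subtype]
  have h1 : Submodule.map J A = span ℂ (Set.range (fun i => J (fam i))) := by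
    conv_lhs => rw [← hfamsp]
    rw [Submodule.map_span, ← Set.range_comp]
    rfl
  rw [h1, finrank_span_eq_card (li_J_comp hJ hfamli)]
  simp

theorem map_comm_swap {φ : V ≃ₗ[ℂ] V} (hcomm : ∀ v, φ (J v) = J (φ v)) (A : Submodule ℂ V) :
    Submodule.map (φ : V →ₗ[ℂ] V) (Submodule.map J A)
      = Submodule.map J (Submodule.map (φ : V →ₗ[ℂ] V) A) := by
  ext y
  simp only [Submodule.mem_map]
  constructor
  · rintro ⟨z, ⟨a, ha, rfl⟩, rfl⟩
    exact ⟨φ a, ⟨a, ha, rfl⟩, (hcomm a).symm⟩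
  · rintro ⟨z, ⟨a, ha, rfl⟩, rfl⟩
    exact ⟨J a, ⟨a, ha, rfl⟩, hcomm a⟩

theorem basis_span_inter {M : Type} [AddCommGroup M] [Module ℂ M] {κ : Type}
    (b : Basis κ ℂ M) (s t : Set κ) :
    span ℂ (⇑b '' s) ⊓ span ℂ (⇑b '' t) = span ℂ (⇑b '' (s ∩ t)) := by
  apply le_antisymm
  · intro x hx
    rw [Submodule.mem_inf] at hx
    obtain ⟨hxs, hxt⟩ := hx
    rw [Basis.mem_span_image] at hxs hxt ⊢
    exact Set.subset_inter hxs hxt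
  · exact le_inf (span_mono (Set.image_mono Set.inter_subset_left))
      (span_mono (Set.image_mono Set.inter_subset_right))

/-- Adapted quaternionic basis data for a subspace. -/
def IsAdapted (J : V →ₗ⋆[ℂ] V) (n k m : ℕ) (A : Submodule ℂ V) : Prop :=
  2*m ≤ k ∧ k ≤ n ∧ ∃ e : (Fin m ⊕ Fin (k - 2*m)) ⊕ Fin (n - (k - m)) → V,
    LinearIndependent ℂ (Sum.elim e (fun i => J (e i))) ∧
    span ℂ (Set.range (Sum.elim e (fun i => J (e i)))) = ⊤ ∧
    A = span ℂ (Set.range (Sum.elim (fun i : Fin m ⊕ Fin (k - 2*m) => e (Sum.inl i))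
      (fun i : Fin m => J (e (Sum.inl (Sum.inl i))))))

section Adapted

variable {n k m : ℕ} {A : Submodule ℂ V}

theorem IsAdapted.invariants [FiniteDimensional ℂ V] (hJ : IsQuaternionicStructure J)
    (h : IsAdapted J n k m A) :
    finrank ℂ A = k ∧ finrank ℂ (A ⊓ Submodule.map J A : Submodule ℂ V) = 2*m := by
  obtain ⟨h2m, hkn, e, hli, hsp, hA⟩ := h
  set E : ((Fin m ⊕ Fin (k - 2*m)) ⊕ Fin (n - (k - m))) ⊕
      ((Fin m ⊕ Fin (k - 2*m)) ⊕ Fin (n - (k - m))) → V :=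
    Sum.elim e (fun i => J (e i)) with hE
  set b := Basis.mk hli (le_of_eq hsp.symm) with hb
  have hbE : ⇑b = E := Basis.coe_mk _ _
  set g : ((Fin m ⊕ Fin (k - 2*m)) ⊕ Fin m) → _ :=
    Sum.elim (fun i : Fin m ⊕ Fin (k - 2*m) => Sum.inl (Sum.inl i))
      (fun i : Fin m => Sum.inr (Sum.inl (Sum.inl i))) with hg
  set gJ : ((Fin m ⊕ Fin (k - 2*m)) ⊕ Fin m) → _ :=
    Sum.elim (fun i : Fin m ⊕ Fin (k - 2*m) => Sum.inr (Sum.inl i))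
      (fun i : Fin m => Sum.inl (Sum.inl (Sum.inl i))) with hgJ
  set g' : (Fin m ⊕ Fin m) → _ :=
    Sum.elim (fun i : Fin m => Sum.inl (Sum.inl (Sum.inl i)))
      (fun i : Fin m => Sum.inr (Sum.inl (Sum.inl i))) with hg'
  have ginj : Function.Injective g := by
    intro z w hzw
    rcases z with z | z <;> rcases w with w | w <;>
      simp only [hg, Sum.elim_inl, Sum.elim_inr, Sum.inl.injEq, Sum.inr.injEq] at hzw <;>
      first
        | rw [hzw]
        | cases hzw
  have g'inj : Function.Injective g' := by
    intro z w hzw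
    rcases z with z | z <;> rcases w with w | w <;>
      simp only [hg', Sum.elim_inl, Sum.elim_inr, Sum.inl.injEq, Sum.inr.injEq] at hzw <;>
      first
        | rw [hzw]
        | cases hzw
  have hAg : A = span ℂ (Set.range (E ∘ g)) := by
    have hfun : (Sum.elim (fun i : Fin m ⊕ Fin (k - 2*m) => e (Sum.inl i))
        (fun i : Fin m => J (e (Sum.inl (Sum.inl i))))) = E ∘ g := by
      funext z
      rcases z with z | z <;> rfl
    rw [hA, hfun]
  have hJA : Submodule.map J A = span ℂ (Set.range (E ∘ gJ)) := by
    rw [hAg, Submodule.map_span, ← Set.range_comp]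
    apply le_antisymm
    · rw [span_le]
      rintro _ ⟨z, rfl⟩
      rcases z with z | z
      · exact subset_span ⟨Sum.inl z, rfl⟩
      · show J (J (e (Sum.inl (Sum.inl z)))) ∈ _
        rw [hJ]
        exact neg_mem (subset_span ⟨Sum.inr z, rfl⟩)
    · rw [span_le]
      rintro _ ⟨z, rfl⟩
      rcases z with z | z
      · exact subset_span ⟨Sum.inl z, rfl⟩
      · show e (Sum.inl (Sum.inl z)) ∈ _
        have : e (Sum.inl (Sum.inl z)) = -(J (J (e (Sum.inl (Sum.inl z))))) := by
          rw [hJ]; rw [neg_neg]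
        rw [this]
        exact neg_mem (subset_span ⟨Sum.inr z, rfl⟩)
  have hrange_inter : Set.range g ∩ Set.range gJ = Set.range g' := by
    ext x
    constructor
    · rintro ⟨⟨z, rfl⟩, ⟨w, hw⟩⟩
      rcases z with z | z
      · rcases w with w | w
        · exact absurd hw (by simp [hg, hgJ])
        · have hz : Sum.inl w = z := by
            simp only [hgJ, hg, Sum.elim_inr, Sum.elim_inl, Sum.inl.injEq] at hw
            exact hw
          exact ⟨Sum.inl w, by rw [hg', Sum.elim_inl, hg, Sum.elim_inl, hz]⟩
      · exact ⟨Sum.inr z, by rw [hg', Sum.elim_inr, hg, Sum.elim_inr]⟩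
    · rintro ⟨z, rfl⟩
      rcases z with z | z
      · exact ⟨⟨Sum.inl (Sum.inl z), rfl⟩, ⟨Sum.inr z, rfl⟩⟩
      · exact ⟨⟨Sum.inr z, rfl⟩, ⟨Sum.inl (Sum.inl z), rfl⟩⟩
  constructor
  · rw [hAg]
    rw [finrank_span_eq_card (hli.comp g ginj)]
    simp only [Fintype.card_sum, Fintype.card_fin]
    omega
  · have hinter : (A ⊓ Submodule.map J A : Submodule ℂ V) = span ℂ (Set.range (E ∘ g')) := by
      rw [hJA, hAg, Set.range_comp, Set.range_comp, ← hbE, basis_span_inter, hbE,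
        hrange_inter, ← Set.range_comp]
    rw [hinter, finrank_span_eq_card (hli.comp g' g'inj)]
    simp only [Fintype.card_sum, Fintype.card_fin]
    omega

theorem adapted_exists [FiniteDimensional ℂ V] (hJ : IsQuaternionicStructure J)
    {n k : ℕ} (hdim : finrank ℂ V = 2*n) (A : Submodule ℂ V)
    (hk : finrank ℂ A = k) (hkn : k ≤ n) : ∃ m, IsAdapted J n k m A := by
  classical
  set W : Submodule ℂ V := A ⊓ Submodule.map J A with hW
  have hWA : W ≤ A := inf_le_left
  have hWJmem : ∀ x ∈ W, J x ∈ W := by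
    rintro x ⟨hxA, y, hyA, rfl⟩
    constructor
    · show J (J y) ∈ A
      rw [hJ]
      exact neg_mem hyA
    · exact ⟨J y, hxA, rfl⟩
  -- J restricted to W
  set JW : W →ₗ⋆[ℂ] W :=
    LinearMap.codRestrict W (J.domRestrict W) (fun c => hWJmem _ c.2) with hJW
  have hJWq : IsQuaternionicStructure JW := by
    intro x
    apply Subtype.ext
    show J (J (x : V)) = -(x : V)
    exact hJ _
  obtain ⟨ι₀, inst₀, w₀, hw₀li, hw₀sp, hw₀card⟩ :=
    exists_qfamily (finrank ℂ W) W JW hJWq rfl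
  set m := Fintype.card ι₀ with hm
  have hWfin : finrank ℂ W = 2*m := hw₀card
  have h2mk : 2*m ≤ k := by
    rw [← hWfin, ← hk]
    exact Submodule.finrank_mono hWA
  refine ⟨m, h2mk, hkn, ?_⟩
  -- the W family in V
  set c : ι₀ → V := fun i => (w₀ i : V) with hc
  set C : ι₀ ⊕ ι₀ → V := Sum.elim c (fun i => J (c i)) with hC
  have hCco : C = W.subtype ∘ (Sum.elim w₀ (fun i => JW (w₀ i))) := by
    funext z; rcases z with i | i <;> rfl
  have hCli : LinearIndependent ℂ C := by
    rw [hCco]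
    exact hw₀li.map' W.subtype W.ker_subtype
  have hCsp : span ℂ (Set.range C) = W := by
    rw [hCco, Set.range_comp, ← Submodule.map_span, hw₀sp, Submodule.map_top,
      Submodule.range_subtype]
  have hCW : ∀ z, C z ∈ W := fun z => by
    rw [← hCsp]; exact subset_span ⟨z, rfl⟩
  -- extend to a basis of A inside A
  set WA : Submodule ℂ A := W.comap A.subtype with hWA'
  have hmapWA : Submodule.map A.subtype WA = W := by
    rw [hWA', Submodule.map_comap_subtype]
    exact inf_eq_right.mpr hWA
  have hWAfin : finrank ℂ WA = 2*m := by
    rw [← hWfin]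
    exact (Submodule.comapSubtypeEquivOfLe hWA).finrank_eq
  set cA : ι₀ ⊕ ι₀ → A := fun z => ⟨C z, hWA (hCW z)⟩ with hcA
  have hcAco : A.subtype ∘ cA = C := rfl
  have hcAli : LinearIndependent ℂ cA := by
    apply LinearIndependent.of_comp A.subtype
    rw [hcAco]
    exact hCli
  have hcAsp : span ℂ (Set.range cA) = WA := by
    apply Submodule.map_injective_of_injective A.injective_subtype
    rw [Submodule.map_span, ← Set.range_comp, hcAco, hCsp, hmapWA]
  set s' := finrank ℂ (A ⧸ WA) with hs'
  have hs'k : s' = k - 2*m := by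
    have := Submodule.finrank_quotient_add_finrank WA
    rw [hWAfin, hk] at this
    omega
  set bq := Module.finBasis ℂ (A ⧸ WA) with hbq
  choose dA hdA using fun j => Submodule.Quotient.mk_surjective WA (bq j)
  set d : Fin s' → V := fun j => (dA j : V) with hd
  have hdmk : (fun j => (Submodule.Quotient.mk (dA j) : A ⧸ WA)) = ⇑bq := by
    funext j; exact hdA j
  set famA : (ι₀ ⊕ ι₀) ⊕ Fin s' → A := Sum.elim cA dA with hfamA
  have hfamAli : LinearIndependent ℂ famA := by
    apply li_sum_quotient WA cA dA (fun z => (hCW z : C z ∈ W)) hcAli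
    rw [hdmk]
    exact bq.linearIndependent
  have hfamAsp : span ℂ (Set.range famA) = ⊤ := by
    apply span_sum_quotient WA cA dA hcAsp
    rw [hdmk]
    exact bq.span_eq
  set famAV : (ι₀ ⊕ ι₀) ⊕ Fin s' → V := fun z => (famA z : V) with hfamAV
  have hfamAVco : famAV = A.subtype ∘ famA := rfl
  have hfamAVli : LinearIndependent ℂ famAV :=
    hfamAli.map' A.subtype A.ker_subtype
  have hfamAVsp : span ℂ (Set.range famAV) = A := by
    rw [hfamAVco, Set.range_comp, ← Submodule.map_span, hfamAsp, Submodule.map_top,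
      Submodule.range_subtype]
  have hfamAV_elim : famAV = Sum.elim C d := by
    funext z; rcases z with (i | i) | j <;> rfl
  have hdA' : ∀ j, d j ∈ A := fun j => (dA j).2
  -- the subspace Y = A + J A and its quaternionic family
  set Y : Submodule ℂ V := A ⊔ Submodule.map J A with hY
  set e₀ : ι₀ ⊕ Fin s' → V := Sum.elim c d with he₀
  set famY : (ι₀ ⊕ Fin s') ⊕ (ι₀ ⊕ Fin s') → V := Sum.elim e₀ (fun i => J (e₀ i)) with hfamY
  have hcmemA : ∀ i, c i ∈ A := fun i => hWA (hCW (Sum.inl i))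
  have hfamYY : ∀ z, famY z ∈ Y := by
    rintro ((i | j) | (i | j))
    · exact Submodule.mem_sup_left (hcmemA i)
    · exact Submodule.mem_sup_left (hdA' j)
    · exact Submodule.mem_sup_right ⟨c i, hcmemA i, rfl⟩
    · exact Submodule.mem_sup_right ⟨d j, hdA' j, rfl⟩
  have hYsp : span ℂ (Set.range famY) = Y := by
    apply le_antisymm
    · rw [span_le]
      rintro _ ⟨z, rfl⟩
      exact hfamYY z
    · rw [hY]
      apply sup_le
      · rw [← hfamAVsp, span_le]
        rintro _ ⟨z, rfl⟩
        rw [hfamAV_elim]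
        rcases z with (i | i) | j
        · exact subset_span ⟨Sum.inl (Sum.inl i), rfl⟩
        · exact subset_span ⟨Sum.inr (Sum.inl i), rfl⟩
        · exact subset_span ⟨Sum.inl (Sum.inr j), rfl⟩
      · rw [← hfamAVsp, Submodule.map_span, ← Set.range_comp, span_le]
        rintro _ ⟨z, rfl⟩
        show J (famAV z) ∈ _
        rw [hfamAV_elim]
        rcases z with (i | i) | j
        · exact subset_span ⟨Sum.inr (Sum.inl i), rfl⟩
        · show J (J (c i)) ∈ _
          rw [hJ]
          exact neg_mem (subset_span ⟨Sum.inl (Sum.inl i), rfl⟩)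
        · exact subset_span ⟨Sum.inr (Sum.inr j), rfl⟩
  have hJAfin : finrank ℂ (Submodule.map J A) = k := by
    rw [finrank_map_J hJ, hk]
  have hYfin : finrank ℂ Y = 2*k - 2*m := by
    have := Submodule.finrank_sup_add_finrank_inf_eq A (Submodule.map J A)
    rw [hk, hJAfin, ← hW, ← hY, hWfin] at this
    omega
  have hYli : LinearIndependent ℂ famY := by
    apply li_of_span_eq_card famY Y hYsp
    simp only [Fintype.card_sum, Fintype.card_fin]
    omega
  -- Y is J-invariant
  have hYJmem : Y ≤ Y.comap J := by
    intro x hx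
    rw [hY, Submodule.mem_sup] at hx
    obtain ⟨a, ha, b, hb, rfl⟩ := hx
    obtain ⟨a', ha', rfl⟩ := hb
    show J (a + J a') ∈ Y
    rw [map_add, hJ]
    exact add_mem (Submodule.mem_sup_right ⟨a, ha, rfl⟩)
      (neg_mem (Submodule.mem_sup_left ha'))
  -- quotient by Y
  set Jq : (V ⧸ Y) →ₛₗ[starRingEnd ℂ] V ⧸ Y := Y.mapQ Y J hYJmem with hJq
  have hJqq : IsQuaternionicStructure Jq := by
    intro z
    obtain ⟨y, rfl⟩ := Submodule.Quotient.mk_surjective Y z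
    show Jq (Jq (Submodule.Quotient.mk y)) = _
    rw [hJq, Submodule.mapQ_apply, Submodule.mapQ_apply, hJ y]
    rfl
  obtain ⟨ι₁, inst₁, zq, hz1, hz2, hz3⟩ :=
    exists_qfamily (finrank ℂ (V ⧸ Y)) (V ⧸ Y) Jq hJqq rfl
  have hquotfin : finrank ℂ (V ⧸ Y) + finrank ℂ Y = 2*n := by
    rw [← hdim]
    exact Submodule.finrank_quotient_add_finrank Y
  have hcard₁ : Fintype.card ι₁ = n - (k - m) := by omega
  choose u hu using fun j => Submodule.Quotient.mk_surjective Y (zq j)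
  -- the full family
  set e' : (ι₀ ⊕ Fin s') ⊕ ι₁ → V := Sum.elim e₀ u with he'
  have hbmk : (fun j => (Submodule.Quotient.mk ((Sum.elim u (fun i => J (u i))) j) : V ⧸ Y))
      = Sum.elim zq (fun i => Jq (zq i)) := by
    funext z
    rcases z with j | j
    · exact hu j
    · show (Submodule.Quotient.mk (J (u j)) : V ⧸ Y) = Jq (zq j)
      rw [hJq, ← hu j, Submodule.mapQ_apply]
  have hsrcli : LinearIndependent ℂ (Sum.elim famY (Sum.elim u (fun i => J (u i)))) := by
    apply li_sum_quotient Y famY _ hfamYY hYli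
    rw [hbmk]
    exact hz1
  have hsrcsp : span ℂ (Set.range (Sum.elim famY (Sum.elim u (fun i => J (u i))))) = ⊤ := by
    apply span_sum_quotient Y famY _ hYsp
    rw [hbmk]
    exact hz2
  have htgteq : Sum.elim e' (fun i => J (e' i))
      = (Sum.elim famY (Sum.elim u (fun i => J (u i)))) ∘
          (Equiv.sumSumSumComm (ι₀ ⊕ Fin s') ι₁ (ι₀ ⊕ Fin s') ι₁) := by
    have h2 : (fun i => J (e' i)) = Sum.elim (fun i => J (e₀ i)) (fun i => J (u i)) := by
      funext z; rcases z with j | j <;> rfl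
    rw [he', h2, hfamY]
    exact elim_four _ _ _ _
  have hFli : LinearIndependent ℂ (Sum.elim e' (fun i => J (e' i))) := by
    rw [htgteq]
    exact (linearIndependent_equiv _).mpr hsrcli
  have hFsp : span ℂ (Set.range (Sum.elim e' (fun i => J (e' i)))) = ⊤ := by
    rw [htgteq, Set.range_comp, Equiv.range_eq_univ, Set.image_univ, hsrcsp]
  -- reindex to the canonical shape
  have hcard₀ : Fintype.card (Fin m) = Fintype.card ι₀ := by simp [hm]
  set σ₀ : Fin m ≃ ι₀ := Fintype.equivOfCardEq hcard₀ with hσ₀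
  set σs : Fin (k - 2*m) ≃ Fin s' := finCongr (by omega) with hσs
  set σ₁ : Fin (n - (k - m)) ≃ ι₁ :=
    Fintype.equivOfCardEq (by simp [hcard₁]) with hσ₁
  set σ : (Fin m ⊕ Fin (k - 2*m)) ⊕ Fin (n - (k - m)) ≃ (ι₀ ⊕ Fin s') ⊕ ι₁ :=
    Equiv.sumCongr (Equiv.sumCongr σ₀ σs) σ₁ with hσ
  refine ⟨e' ∘ σ, ?_, ?_, ?_⟩
  · have : Sum.elim (e' ∘ σ) (fun i => J ((e' ∘ σ) i))
        = (Sum.elim e' (fun i => J (e' i))) ∘ Sum.map σ σ := by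
      funext z; rcases z with z | z <;> rfl
    rw [this]
    exact hFli.comp (Sum.map σ σ) ((Equiv.sumCongr σ σ).injective)
  · have h1 : Sum.elim (e' ∘ σ) (fun i => J ((e' ∘ σ) i))
        = (Sum.elim e' (fun i => J (e' i))) ∘ Sum.map σ σ := by
      funext z; rcases z with z | z <;> rfl
    have hsurj : Function.Surjective (Sum.map ⇑σ ⇑σ) := (σ.sumCongr σ).surjective
    rw [h1, Set.range_comp, hsurj.range_eq, Set.image_univ, hFsp]
  · -- the A-clause
    set τ : (Fin m ⊕ Fin (k - 2*m)) ⊕ Fin m → (ι₀ ⊕ ι₀) ⊕ Fin s' :=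
      Sum.elim (Sum.elim (fun i => Sum.inl (Sum.inl (σ₀ i))) (fun j => Sum.inr (σs j)))
        (fun i => Sum.inl (Sum.inr (σ₀ i))) with hτ
    have hτsurj : Function.Surjective τ := by
      rintro ((i | i) | j)
      · exact ⟨Sum.inl (Sum.inl (σ₀.symm i)), by simp [hτ]⟩
      · exact ⟨Sum.inr (σ₀.symm i), by simp [hτ]⟩
      · exact ⟨Sum.inl (Sum.inr (σs.symm j)), by simp [hτ]⟩
    have hfameq : (Sum.elim (fun i : Fin m ⊕ Fin (k - 2*m) => (e' ∘ σ) (Sum.inl i))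
        (fun i : Fin m => J ((e' ∘ σ) (Sum.inl (Sum.inl i))))) = famAV ∘ τ := by
      funext z
      rcases z with (i | j) | i
      · show c (σ₀ i) = famAV (Sum.inl (Sum.inl (σ₀ i)))
        rw [hfamAV_elim]; rfl
      · show d (σs j) = famAV (Sum.inr (σs j))
        rw [hfamAV_elim]; rfl
      · show J (c (σ₀ i)) = famAV (Sum.inl (Sum.inr (σ₀ i)))
        rw [hfamAV_elim]; rfl
    rw [hfameq, Set.range_comp, hτsurj.range_eq, Set.image_univ, hfamAVsp]

theorem adapted_realize [FiniteDimensional ℂ V] (hJ : IsQuaternionicStructure J)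
    {n k m : ℕ} (hdim : finrank ℂ V = 2*n) (h2m : 2*m ≤ k) (hkn : k ≤ n) :
    ∃ A : Submodule ℂ V, IsAdapted J n k m A := by
  obtain ⟨ι, inst, v, hli, hsp, hcard⟩ := exists_qfamily (finrank ℂ V) V J hJ rfl
  have hcard' : Fintype.card ι = n := by omega
  have hcards : Fintype.card ((Fin m ⊕ Fin (k - 2*m)) ⊕ Fin (n - (k - m))) = Fintype.card ι := by
    simp only [Fintype.card_sum, Fintype.card_fin, hcard']
    omega
  set σ : (Fin m ⊕ Fin (k - 2*m)) ⊕ Fin (n - (k - m)) ≃ ι :=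
    Fintype.equivOfCardEq hcards with hσ
  set e := v ∘ σ with he
  have heq : Sum.elim e (fun i => J (e i))
      = (Sum.elim v (fun i => J (v i))) ∘ Sum.map σ σ := by
    funext z; rcases z with z | z <;> rfl
  refine ⟨_, h2m, hkn, e, ?_, ?_, rfl⟩
  · rw [heq]
    exact hli.comp (Sum.map σ σ) ((σ.sumCongr σ).injective)
  · have hsurj : Function.Surjective (Sum.map ⇑σ ⇑σ) := (σ.sumCongr σ).surjective
    rw [heq, Set.range_comp, hsurj.range_eq, Set.image_univ, hsp]

theorem adapted_transport [FiniteDimensional ℂ V] (hJ : IsQuaternionicStructure J)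
    {n k m : ℕ} {A B : Submodule ℂ V} (hdim : finrank ℂ V = 2*n)
    (hA : IsAdapted J n k m A) (hB : IsAdapted J n k m B) :
    ∃ φ : V ≃ₗ[ℂ] V, (∀ v, φ (J v) = J (φ v)) ∧
      LinearMap.det (φ : V →ₗ[ℂ] V) = 1 ∧
      Submodule.map (φ : V →ₗ[ℂ] V) A = B := by
  rcases Nat.eq_zero_or_pos n with hn0 | hnpos
  · subst hn0
    haveI : Subsingleton V := Module.finrank_zero_iff.mp (by omega : finrank ℂ V = 0)
    haveI : Subsingleton (Submodule ℂ V) := inferInstance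
    refine ⟨LinearEquiv.refl ℂ V, fun v => Subsingleton.elim _ _, ?_, Subsingleton.elim _ _⟩
    have : ((LinearEquiv.refl ℂ V : V ≃ₗ[ℂ] V) : V →ₗ[ℂ] V) = LinearMap.id := rfl
    rw [this, LinearMap.det_id]
  obtain ⟨h2m, hkn, e, hEli, hEsp, hAe⟩ := hA
  obtain ⟨_, _, f, hFli, hFsp, hBf⟩ := hB
  set E := Sum.elim e (fun i => J (e i)) with hEdef
  set F := Sum.elim f (fun i => J (f i)) with hFdef
  set bE := Basis.mk hEli (le_of_eq hEsp.symm) with hbE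
  set bF := Basis.mk hFli (le_of_eq hFsp.symm) with hbF
  set φ₀ : V ≃ₗ[ℂ] V := bE.equiv bF (Equiv.refl _) with hφ₀def
  have hφ₀ : ∀ i, φ₀ (E i) = F i := by
    intro i
    have h1 : E i = bE i := (Basis.mk_apply hEli _ i).symm
    have h2 : F i = bF i := (Basis.mk_apply hFli _ i).symm
    rw [h1, h2, hφ₀def, Basis.equiv_apply]
    rfl
  have hcomm : ∀ v, φ₀ (J v) = J (φ₀ v) := by
    have hsemi : ((φ₀ : V →ₗ[ℂ] V).comp (J : V →ₗ⋆[ℂ] V) : V →ₗ⋆[ℂ] V)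
        = (J : V →ₗ⋆[ℂ] V).comp (φ₀ : V →ₗ[ℂ] V) := by
      apply Basis.ext bE
      intro i
      rw [LinearMap.comp_apply, LinearMap.comp_apply]
      have hEi : bE i = E i := Basis.mk_apply hEli _ i
      have hφ₀' : ∀ j, (φ₀ : V →ₗ[ℂ] V) (E j) = F j := hφ₀
      rw [hEi]
      rcases i with y | y
      · show (φ₀ : V →ₗ[ℂ] V) (E (Sum.inr y)) = J ((φ₀ : V →ₗ[ℂ] V) (E (Sum.inl y)))
        rw [hφ₀', hφ₀']
        rfl
      · show (φ₀ : V →ₗ[ℂ] V) (J (J (e y))) = J ((φ₀ : V →ₗ[ℂ] V) (E (Sum.inr y)))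
        rw [hJ (e y), show (-(e y)) = -(E (Sum.inl y)) from rfl, map_neg, hφ₀', hφ₀']
        show -(f y) = J (J (f y))
        rw [hJ (f y)]
    intro v
    exact DFunLike.congr_fun hsemi v
  have hmapB : Submodule.map (φ₀ : V →ₗ[ℂ] V) A = B := by
    have hfun : ⇑(φ₀ : V →ₗ[ℂ] V) ∘ (Sum.elim (fun i : Fin m ⊕ Fin (k - 2*m) => e (Sum.inl i))
        (fun i : Fin m => J (e (Sum.inl (Sum.inl i)))))
        = Sum.elim (fun i : Fin m ⊕ Fin (k - 2*m) => f (Sum.inl i))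
            (fun i : Fin m => J (f (Sum.inl (Sum.inl i)))) := by
      funext z
      rcases z with i | i
      · exact hφ₀ (Sum.inl (Sum.inl i))
      · exact hφ₀ (Sum.inr (Sum.inl (Sum.inl i)))
    rw [hAe, hBf, Submodule.map_span, ← Set.range_comp, hfun]
  obtain ⟨r, hrpos, hrdet⟩ := det_pos_of_comm (finrank ℂ V) V J hJ
    (φ₀ : V →ₗ[ℂ] V) φ₀.injective hcomm rfl
  set cr : ℝ := r ^ (-(1 : ℝ)/(2*n)) with hcr
  have hcrpos : 0 < cr := Real.rpow_pos_of_pos hrpos _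
  have hcrpow : cr ^ (2*n : ℕ) = r⁻¹ := by
    rw [hcr, ← Real.rpow_natCast (r ^ (-(1 : ℝ)/(2*n))) (2*n), ← Real.rpow_mul hrpos.le]
    rw [show (-(1 : ℝ)/(2*n)) * ((2*n : ℕ) : ℝ) = -1 by
      push_cast
      field_simp]
    exact Real.rpow_neg_one r
  set c : ℂ := (cr : ℂ) with hcc
  have hc0 : c ≠ 0 := by
    simp [hcc, Complex.ofReal_eq_zero]
    exact ne_of_gt hcrpos
  set ψ : V ≃ₗ[ℂ] V := φ₀.trans (LinearEquiv.smulOfNeZero ℂ V c hc0) with hψdef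
  have hψapp : ∀ v, ψ v = c • φ₀ v := fun v => rfl
  have hψlin : (ψ : V →ₗ[ℂ] V) = c • (φ₀ : V →ₗ[ℂ] V) := by
    apply LinearMap.ext
    intro v
    rfl
  refine ⟨ψ, ?_, ?_, ?_⟩
  · intro v
    rw [hψapp, hψapp, hcomm, map_smulₛₗ]
    congr 1
    exact (Complex.conj_ofReal cr).symm
  · rw [hψlin, LinearMap.det_smul, hrdet, hdim]
    have : c ^ (2*n) = ((r⁻¹ : ℝ) : ℂ) := by
      rw [hcc, ← hcrpow]
      push_cast
      ring
    rw [this, ← Complex.ofReal_mul, inv_mul_cancel₀ (ne_of_gt hrpos)]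
    norm_num
  · rw [← hmapB]
    apply le_antisymm
    · rintro _ ⟨a, ha, rfl⟩
      show (ψ : V →ₗ[ℂ] V) a ∈ _
      have h5 : (ψ : V →ₗ[ℂ] V) a = c • ((φ₀ : V →ₗ[ℂ] V) a) := rfl
      rw [h5]
      exact Submodule.smul_mem _ _ ⟨a, ha, rfl⟩
    · rintro _ ⟨a, ha, rfl⟩
      refine ⟨c⁻¹ • a, Submodule.smul_mem _ _ ha, ?_⟩
      show c • ((φ₀ : V →ₗ[ℂ] V) (c⁻¹ • a)) = (φ₀ : V →ₗ[ℂ] V) a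
      rw [map_smul, smul_smul, mul_inv_cancel₀ hc0, one_smul]

end Adapted

end QH

/-- Two `k`-dimensional subspaces lie in the same orbit of `SL(V, ℍ)`, the group of
determinant-one `ℂ`-linear operators commuting with the quaternionic structure `J`. -/
def SameSLHOrbit (J : V →ₗ⋆[ℂ] V) (k : ℕ)
    (A B : {U : Submodule ℂ V // Module.finrank ℂ U = k}) : Prop :=
  ∃ φ : V ≃ₗ[ℂ] V, (∀ v, φ (J v) = J (φ v)) ∧
    LinearMap.det (φ : V →ₗ[ℂ] V) = 1 ∧
    Submodule.map (φ : V →ₗ[ℂ] V) A.1 = B.1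

theorem card_SLH_orbits_grassmannian
    [FiniteDimensional ℂ V] (n k : ℕ) (hn : finrank ℂ V = 2 * n)
    (J : V →ₗ⋆[ℂ] V) (hJ : IsQuaternionicStructure J) (hk : k ≤ n) :
    Nat.card (Quot (SameSLHOrbit J k (V := V))) = k / 2 + 1 := by
  classical
  have hrep : ∀ m : Fin (k/2+1), ∃ A : Submodule ℂ V, QH.IsAdapted J n k (m : ℕ) A := by
    intro m
    have hm := m.isLt
    exact QH.adapted_realize hJ hn (by omega) hk
  choose Arep hArep using hrep
  have hArep_rank : ∀ m, finrank ℂ (Arep m) = k :=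
    fun m => (QH.IsAdapted.invariants hJ (hArep m)).1
  set f : Fin (k/2+1) → Quot (SameSLHOrbit J k (V := V)) :=
    fun m => Quot.mk _ ⟨Arep m, hArep_rank m⟩ with hf
  set inv : {U : Submodule ℂ V // Module.finrank ℂ U = k} → ℕ :=
    fun A => finrank ℂ (A.1 ⊓ Submodule.map J A.1 : Submodule ℂ V) with hinvdef
  have hinv_well : ∀ A B, SameSLHOrbit J k A B → inv A = inv B := by
    rintro ⟨A, hA⟩ ⟨B, hB⟩ ⟨φ, hφc, hφd, hφm⟩
    show finrank ℂ (A ⊓ Submodule.map J A : Submodule ℂ V)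
        = finrank ℂ (B ⊓ Submodule.map J B : Submodule ℂ V)
    have hφm' : Submodule.map (φ : V →ₗ[ℂ] V) A = B := hφm
    rw [← hφm', ← QH.map_comm_swap hφc A, ← Submodule.map_inf (φ : V →ₗ[ℂ] V) φ.injective]
    exact (LinearEquiv.finrank_map_eq φ _).symm
  set g : Quot (SameSLHOrbit J k (V := V)) → ℕ := Quot.lift inv hinv_well with hg
  have hgf : ∀ m : Fin (k/2+1), g (f m) = 2*(m : ℕ) :=
    fun m => (QH.IsAdapted.invariants hJ (hArep m)).2
  have hfinj : Function.Injective f := by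
    intro m₁ m₂ h
    have h2 := congrArg g h
    rw [hgf m₁, hgf m₂] at h2
    exact Fin.ext (by omega)
  have hfsurj : Function.Surjective f := by
    intro q
    obtain ⟨a, rfl⟩ := Quot.exists_rep q
    obtain ⟨A, hAk⟩ := a
    obtain ⟨m', hm'⟩ := QH.adapted_exists hJ hn A hAk hk
    have h2m : 2*m' ≤ k := hm'.1
    refine ⟨⟨m', by omega⟩, ?_⟩
    apply Quot.sound
    obtain ⟨φ, h1, h2, h3⟩ := QH.adapted_transport hJ hn (hArep ⟨m', by omega⟩) hm'
    exact ⟨φ, h1, h2, h3⟩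
  rw [← Nat.card_eq_of_bijective f ⟨hfinj, hfsurj⟩, Nat.card_eq_fintype_card,
    Fintype.card_fin]
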